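/- Let φ₀ ∈ Hom_K(F, K̄) and let E be a finite extension of K inside K̄ containing φ₀(F) (which equals the reflex field E_{{φ₀}}); let R be a commutative O_E-algebra. Then: (1) the multiplication map O_F ⊗_{O_K} R → R, a⊗r ↦ φ₀(a)·r (where φ₀(a) is viewed in O_E and then in R), is surjective with kernel equal to J_{{φ₀},R}, so it induces an isomorphism (O_F ⊗_{O_K} R)/J_{{φ₀},R} ≅ R; (2) if M is a locally free O_F ⊗_{O_K} R-module and 𝓕 ⊆ M is an O_F ⊗_{O_K} R-submodule which is an R-module direct summand, then J_{{φ₀},R}·M ⊆ 𝓕 holds if and only if O_F acts on M/𝓕 through φ₀, i.e. (a⊗1)·m = (1⊗φ₀(a))·m in M/𝓕 for all a ∈ O_F and all m ∈ M/𝓕. -/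
import Mathlib


open scoped TensorProduct Polynomial

set_option synthInstance.maxHeartbeats 400000
set_option maxHeartbeats 1000000

noncomputable section

variable (p : ℕ) [Fact p.Prime]

/-- The ring of integers of a `p`-adic field `L`: the integral closure of `ℤₚ` in `L`. -/
def RInt (L : Type) [Field L] [Algebra ℤ_[p] L] : Type := ↥(integralClosure ℤ_[p] L)

local instance instCR (L : Type) [Field L] [Algebra ℤ_[p] L] : CommRing (RInt p L) :=
  inferInstanceAs (CommRing ↥(integralClosure ℤ_[p] L))

local instance instAlgL (L : Type) [Field L] [Algebra ℤ_[p] L] : Algebra (RInt p L) L :=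
  inferInstanceAs (Algebra ↥(integralClosure ℤ_[p] L) L)

/-- Functoriality of rings of integers. -/
def RIntMap (L L' : Type) [Field L] [Field L'] [Algebra ℤ_[p] L] [Algebra ℤ_[p] L']
    (f : L →ₐ[ℤ_[p]] L') : RInt p L →+* RInt p L' :=
  show ↥(integralClosure ℤ_[p] L) →+* ↥(integralClosure ℤ_[p] L') from
  { toFun := fun x => ⟨f x, IsIntegral.map f x.2⟩
    map_one' := by ext; simp
    map_mul' := fun x y => by ext; simp
    map_zero' := by ext; simp
    map_add' := fun x y => by ext; simp }

section Galois

variable (K F : Type) [Field K] [Field F] [Algebra K F]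

/-- The stabilizer of a finite set of embeddings `F →ₐ[K] K̄` inside `Gal(K̄/K)`:
the set of `σ` with `σ ∘ S = S`. -/
def galStab (S : Finset (F →ₐ[K] AlgebraicClosure K)) :
    Subgroup (AlgebraicClosure K ≃ₐ[K] AlgebraicClosure K) := by
  letI := Classical.decEq (F →ₐ[K] AlgebraicClosure K)
  exact
  { carrier := {σ | S.image (fun φ =>
        ((σ : AlgebraicClosure K →ₐ[K] AlgebraicClosure K)).comp φ) = S}
    one_mem' := by
      have h : (fun φ : F →ₐ[K] AlgebraicClosure K =>
          (((1 : AlgebraicClosure K ≃ₐ[K] AlgebraicClosure K) :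
            AlgebraicClosure K →ₐ[K] AlgebraicClosure K)).comp φ) = id := by
        funext φ; exact AlgHom.ext fun x => rfl
      simp only [Set.mem_setOf_eq, h, Finset.image_id]
    mul_mem' := by
      intro σ τ hσ hτ
      simp only [Set.mem_setOf_eq] at hσ hτ ⊢
      have h : (fun φ : F →ₐ[K] AlgebraicClosure K =>
          (((σ * τ : AlgebraicClosure K ≃ₐ[K] AlgebraicClosure K) :
            AlgebraicClosure K →ₐ[K] AlgebraicClosure K)).comp φ)
          = (fun φ => ((σ : AlgebraicClosure K →ₐ[K] AlgebraicClosure K)).comp φ) ∘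
            (fun φ => ((τ : AlgebraicClosure K →ₐ[K] AlgebraicClosure K)).comp φ) := by
        funext φ; exact AlgHom.ext fun x => rfl
      rw [h, ← Finset.image_image, hτ, hσ]
    inv_mem' := by
      intro σ hσ
      simp only [Set.mem_setOf_eq] at hσ ⊢
      conv_lhs => rw [← hσ]
      rw [Finset.image_image]
      have h : ((fun φ : F →ₐ[K] AlgebraicClosure K =>
          (((σ⁻¹ : AlgebraicClosure K ≃ₐ[K] AlgebraicClosure K) :
            AlgebraicClosure K →ₐ[K] AlgebraicClosure K)).comp φ) ∘
          (fun φ => ((σ : AlgebraicClosure K →ₐ[K] AlgebraicClosure K)).comp φ)) = id := by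
        funext φ
        exact AlgHom.ext fun x => σ.symm_apply_apply (φ x)
      rw [h, Finset.image_id] }

/-- The reflex field `E_S ⊆ K̄` of a set `S` of embeddings `F →ₐ[K] K̄`: the fixed field
of its stabilizer in `Gal(K̄/K)`. -/
def reflexField (S : Finset (F →ₐ[K] AlgebraicClosure K)) :
    IntermediateField K (AlgebraicClosure K) :=
  IntermediateField.fixedField (galStab K F S)

end Galois

section Eis

/- `K` is a finite extension of `ℚₚ` (with its induced `ℤₚ`-algebra structure), `F` is a
finite extension of `K`, and `E` is a further finite extension of `K` equipped with a
`K`-embedding `ιE : E → K̄` realizing it as a subfield of an algebraic closure of `K`. -/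
variable (K : Type) [Field K] [Algebra ℚ_[p] K] [FiniteDimensional ℚ_[p] K]
  [Algebra ℤ_[p] K] [IsScalarTower ℤ_[p] ℚ_[p] K]
variable (F : Type) [Field F] [Algebra K F] [FiniteDimensional K F]
  [Algebra ℤ_[p] F] [IsScalarTower ℤ_[p] K F]
variable (E : Type) [Field E] [Algebra K E] [Algebra ℤ_[p] E] [IsScalarTower ℤ_[p] K E]

local instance algOKOF : Algebra (RInt p K) (RInt p F) :=
  (RIntMap p K F (IsScalarTower.toAlgHom ℤ_[p] K F)).toAlgebra

local instance algOKOE : Algebra (RInt p K) (RInt p E) :=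
  (RIntMap p K E (IsScalarTower.toAlgHom ℤ_[p] K E)).toAlgebra

variable (ιE : E →ₐ[K] AlgebraicClosure K)

/-- The canonical map `O_E → K̄` induced by `ιE : E → K̄`. -/
def OEtoKb : RInt p E →+* AlgebraicClosure K :=
  (ιE : E →+* AlgebraicClosure K).comp (algebraMap (RInt p E) E)

/-- `Q ∈ O_E[T]` represents the Eisenstein polynomial `e_{ζ,S}(T) = ∏_{φ ∈ S} (T - φ(ζ))`. -/
def IsEisPoly (S : Finset (F →ₐ[K] AlgebraicClosure K)) (ζ : RInt p F)
    (Q : Polynomial (RInt p E)) : Prop :=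
  Q.map (OEtoKb p K E ιE) =
    ∏ φ ∈ S, (Polynomial.X - Polynomial.C (φ (algebraMap (RInt p F) F ζ)))

variable (R : Type) [CommRing R] [Algebra (RInt p K) R] [Algebra (RInt p E) R]

/-- The element `e_S = e_{ζ,S}(ζ ⊗ 1)` of `O_F ⊗_{O_K} R`, where `Q ∈ O_E[T]`
represents the Eisenstein polynomial `e_{ζ,S}(T)`. -/
def eElt (Q : Polynomial (RInt p E)) (ζ : RInt p F) : (RInt p F) ⊗[RInt p K] R :=
  Polynomial.eval₂
    ((Algebra.TensorProduct.includeRight :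
        R →ₐ[RInt p K] (RInt p F) ⊗[RInt p K] R).toRingHom.comp (algebraMap (RInt p E) R))
    (ζ ⊗ₜ[RInt p K] (1 : R)) Q

/-- The Eisenstein ideal `J_{S,R} ⊆ O_F ⊗_{O_K} R`, generated by `e_S`. -/
def JIdeal (Q : Polynomial (RInt p E)) (ζ : RInt p F) :
    Ideal ((RInt p F) ⊗[RInt p K] R) :=
  Ideal.span {eElt p K F E R Q ζ}

local instance algOKKb : Algebra (RInt p K) (AlgebraicClosure K) :=
  ((algebraMap K (AlgebraicClosure K)).comp (algebraMap (RInt p K) K)).toAlgebra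

/-- The restriction of an embedding `φ : F →ₐ[K] K̄` to the ring of integers, as an
`O_K`-algebra homomorphism `O_F →ₐ[O_K] K̄`. -/
def embToKb (φ : F →ₐ[K] AlgebraicClosure K) : RInt p F →ₐ[RInt p K] AlgebraicClosure K where
  toRingHom := (φ : F →+* AlgebraicClosure K).comp (algebraMap (RInt p F) F)
  commutes' := fun r => by
    have h1 : (algebraMap (RInt p F) F) ((algebraMap (RInt p K) (RInt p F)) r)
        = algebraMap K F ((algebraMap (RInt p K) K) r) := by
      show algebraMap K F ((IsScalarTower.toAlgHom ℤ_[p] K K) ((algebraMap (RInt p K) K) r)) = _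
      rfl
    show φ ((algebraMap (RInt p F) F) ((algebraMap (RInt p K) (RInt p F)) r)) = _
    rw [h1, φ.commutes]
    rfl

/-- The inclusion `O_E → K̄` as an `O_K`-algebra homomorphism. -/
def oEToKb : RInt p E →ₐ[RInt p K] AlgebraicClosure K where
  toRingHom := OEtoKb p K E ιE
  commutes' := fun r => by
    have h1 : (algebraMap (RInt p E) E) ((algebraMap (RInt p K) (RInt p E)) r)
        = algebraMap K E ((algebraMap (RInt p K) K) r) := by
      show algebraMap K E ((IsScalarTower.toAlgHom ℤ_[p] K K) ((algebraMap (RInt p K) K) r)) = _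
      rfl
    show ιE ((algebraMap (RInt p E) E) ((algebraMap (RInt p K) (RInt p E)) r)) = _
    rw [h1, ιE.commutes]
    rfl

/-- The map `O_F ⊗_{O_K} O_E → K̄` whose value on `a ⊗ e` is `φ(a)·e`. -/
def phiComponent (φ : F →ₐ[K] AlgebraicClosure K) :
    (RInt p F) ⊗[RInt p K] (RInt p E) →ₐ[RInt p K] AlgebraicClosure K :=
  Algebra.TensorProduct.productMap (embToKb p K F φ) (oEToKb p K E ιE)

attribute [local instance] Algebra.TensorProduct.rightAlgebra

variable (φE : F →ₐ[K] E)

/-- When an embedding `φ₀ : F → K̄` factors through `E` via `φE : F → E`, the induced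
`O_K`-algebra homomorphism `O_F → O_E` on rings of integers. -/
def phiZeroO : RInt p F →ₐ[RInt p K] RInt p E where
  toRingHom := RIntMap p F E (φE.restrictScalars ℤ_[p])
  commutes' := fun r => by
    apply Subtype.ext
    show φE ((algebraMap K F) ((algebraMap (RInt p K) K) r)) = _
    rw [φE.commutes]
    rfl

/-- Example 2.7 / equation (1.4) of the paper. Let
`φ₀ ∈ Hom_K(F, K̄)` and let `E/K` be a finite extension (inside `K̄` via `ιE`) containing
`φ₀(F)`, i.e. `φ₀` factors as `ιE ∘ φE`.  Let `R` be a commutative `O_E`-algebra.  Then: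
(1) the multiplication map `O_F ⊗_{O_K} R → R`, `a ⊗ r ↦ φ₀(a)·r`, is surjective with
kernel the Eisenstein ideal `J_{{φ₀},R}`; and
(2) for every locally free `O_F ⊗_{O_K} R`-module `M` and every
`O_F ⊗_{O_K} R`-submodule `𝓕 ⊆ M` which is an `R`-module direct summand, one has
`J_{{φ₀},R}·M ⊆ 𝓕` if and only if `O_F` acts on `M/𝓕` through `φ₀`. -/
theorem statement3 [FiniteDimensional K E] [IsScalarTower (RInt p K) (RInt p E) R]
    (φ₀ : F →ₐ[K] AlgebraicClosure K) (hφE : ∀ x : F, ιE (φE x) = φ₀ x)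
    (ζ : RInt p F) (hζ : Algebra.adjoin (RInt p K) {ζ} = ⊤)
    (Q₀ : Polynomial (RInt p E)) (hQ₀ : IsEisPoly p K F E ιE {φ₀} ζ Q₀)
    -- data for part (2):
    (M : Type) [AddCommGroup M] [Module ((RInt p F) ⊗[RInt p K] R) M]
    [Module R M] [IsScalarTower R ((RInt p F) ⊗[RInt p K] R) M]
    (hMfin : Module.Finite ((RInt p F) ⊗[RInt p K] R) M)
    (hMproj : Module.Projective ((RInt p F) ⊗[RInt p K] R) M)
    (𝓕 : Submodule ((RInt p F) ⊗[RInt p K] R) M)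
    (h𝓕 : ∃ N : Submodule R M, IsCompl (𝓕.restrictScalars R) N) :
    -- (1) the multiplication map is surjective with kernel `J_{{φ₀},R}`
    (Function.Surjective
      (Algebra.TensorProduct.productMap
        ((IsScalarTower.toAlgHom (RInt p K) (RInt p E) R).comp (phiZeroO p K F E φE))
        (AlgHom.id (RInt p K) R)) ∧
      ∀ x : (RInt p F) ⊗[RInt p K] R,
        (Algebra.TensorProduct.productMap
          ((IsScalarTower.toAlgHom (RInt p K) (RInt p E) R).comp (phiZeroO p K F E φE))
          (AlgHom.id (RInt p K) R)) x = 0 ↔ x ∈ JIdeal p K F E R Q₀ ζ) ∧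
    -- (2) strictness is equivalent to the `O_F`-action on `M/𝓕` being through `φ₀`
    ((JIdeal p K F E R Q₀ ζ • (⊤ : Submodule ((RInt p F) ⊗[RInt p K] R) M) ≤ 𝓕) ↔
      ∀ (a : RInt p F) (m : M ⧸ 𝓕),
        ((a ⊗ₜ[RInt p K] (1 : R) : (RInt p F) ⊗[RInt p K] R)) • m =
        (((1 : RInt p F) ⊗ₜ[RInt p K]
            (algebraMap (RInt p E) R ((phiZeroO p K F E φE) a)) :
          (RInt p F) ⊗[RInt p K] R)) • m) := by

  classical
  -- Abbreviations
  set ψ := Algebra.TensorProduct.productMap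
      ((IsScalarTower.toAlgHom (RInt p K) (RInt p E) R).comp (phiZeroO p K F E φE))
      (AlgHom.id (RInt p K) R) with hψdef
  -- `Q₀` is `X - C (φE ζ)`
  have hinj : Function.Injective (OEtoKb p K E ιE) := by
    intro a b h
    have h2 : ιE (algebraMap (RInt p E) E a) = ιE (algebraMap (RInt p E) E b) := h
    exact Subtype.ext ((ιE : E →+* AlgebraicClosure K).injective h2)
  have hc : OEtoKb p K E ιE ((phiZeroO p K F E φE) ζ) = φ₀ (algebraMap (RInt p F) F ζ) :=
    hφE (algebraMap (RInt p F) F ζ)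
  have hQ₀' : Q₀.map (OEtoKb p K E ιE)
      = Polynomial.X - Polynomial.C (φ₀ (algebraMap (RInt p F) F ζ)) := by
    have h := hQ₀
    rwa [IsEisPoly, Finset.prod_singleton] at h
  have hQ : Q₀ = Polynomial.X - Polynomial.C ((phiZeroO p K F E φE) ζ) := by
    apply Polynomial.map_injective _ hinj
    rw [hQ₀', Polynomial.map_sub, Polynomial.map_X, Polynomial.map_C, hc]
  -- the Eisenstein element
  have he : eElt p K F E R Q₀ ζ
      = ζ ⊗ₜ[RInt p K] (1 : R)
        - (1 : RInt p F) ⊗ₜ[RInt p K] (algebraMap (RInt p E) R ((phiZeroO p K F E φE) ζ)) := by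
    rw [eElt, hQ, Polynomial.eval₂_sub, Polynomial.eval₂_X, Polynomial.eval₂_C]
    rfl
  have heJ : eElt p K F E R Q₀ ζ ∈ JIdeal p K F E R Q₀ ζ := Ideal.subset_span rfl
  -- base case : scalars from `O_K`
  have hbase : ∀ r : RInt p K,
      ((algebraMap (RInt p K) (RInt p F) r) ⊗ₜ[RInt p K] (1 : R)
        : (RInt p F) ⊗[RInt p K] R)
      = (1 : RInt p F) ⊗ₜ[RInt p K]
          (algebraMap (RInt p E) R
            ((phiZeroO p K F E φE) (algebraMap (RInt p K) (RInt p F) r))) := by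
    intro r
    rw [(phiZeroO p K F E φE).commutes, ← IsScalarTower.algebraMap_apply,
      Algebra.algebraMap_eq_smul_one (A := RInt p F), Algebra.algebraMap_eq_smul_one (A := R),
      ← TensorProduct.smul_tmul', TensorProduct.tmul_smul]
  -- key difference lemma
  have hdiff : ∀ a : RInt p F,
      a ⊗ₜ[RInt p K] (1 : R)
        - (1 : RInt p F) ⊗ₜ[RInt p K] (algebraMap (RInt p E) R ((phiZeroO p K F E φE) a))
      ∈ JIdeal p K F E R Q₀ ζ := by
    intro a
    have ha : a ∈ Algebra.adjoin (RInt p K) ({ζ} : Set (RInt p F)) := hζ ▸ Algebra.mem_top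
    induction ha using Algebra.adjoin_induction with
    | mem x hx =>
        rw [Set.mem_singleton_iff] at hx
        subst hx
        rw [← he]; exact heJ
    | algebraMap r =>
        rw [hbase r, sub_self]; exact zero_mem _
    | add x y hx hy px py =>
        have hq : (x + y) ⊗ₜ[RInt p K] (1 : R)
            - (1 : RInt p F) ⊗ₜ[RInt p K]
                (algebraMap (RInt p E) R ((phiZeroO p K F E φE) (x + y)))
            = (x ⊗ₜ[RInt p K] (1 : R)
                - (1 : RInt p F) ⊗ₜ[RInt p K]
                    (algebraMap (RInt p E) R ((phiZeroO p K F E φE) x)))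
              + (y ⊗ₜ[RInt p K] (1 : R)
                - (1 : RInt p F) ⊗ₜ[RInt p K]
                    (algebraMap (RInt p E) R ((phiZeroO p K F E φE) y))) := by
          rw [map_add, map_add, TensorProduct.add_tmul, TensorProduct.tmul_add]
          ring
        rw [hq]; exact add_mem px py
    | mul x y hx hy px py =>
        have hq : (x * y) ⊗ₜ[RInt p K] (1 : R)
            - (1 : RInt p F) ⊗ₜ[RInt p K]
                (algebraMap (RInt p E) R ((phiZeroO p K F E φE) (x * y)))
            = (x ⊗ₜ[RInt p K] (1 : R))
                * (y ⊗ₜ[RInt p K] (1 : R)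
                  - (1 : RInt p F) ⊗ₜ[RInt p K]
                      (algebraMap (RInt p E) R ((phiZeroO p K F E φE) y)))
              + (x ⊗ₜ[RInt p K] (1 : R)
                  - (1 : RInt p F) ⊗ₜ[RInt p K]
                      (algebraMap (RInt p E) R ((phiZeroO p K F E φE) x)))
                * ((1 : RInt p F) ⊗ₜ[RInt p K]
                      (algebraMap (RInt p E) R ((phiZeroO p K F E φE) y))) := by
          rw [map_mul, map_mul]
          simp only [mul_sub, sub_mul, Algebra.TensorProduct.tmul_mul_tmul, one_mul, mul_one]
          ring
        rw [hq]
        exact add_mem (Ideal.mul_mem_left _ _ py) (Ideal.mul_mem_right _ _ px)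
  -- `ψ` on pure tensors
  have hψt : ∀ (a : RInt p F) (r : R),
      ψ (a ⊗ₜ[RInt p K] r) = algebraMap (RInt p E) R ((phiZeroO p K F E φE) a) * r :=
    fun a r => rfl
  have hψe : ψ (eElt p K F E R Q₀ ζ) = 0 := by
    rw [he, map_sub, hψt, hψt]; simp
  have key : ∀ x : (RInt p F) ⊗[RInt p K] R,
      x - (1 : RInt p F) ⊗ₜ[RInt p K] (ψ x) ∈ JIdeal p K F E R Q₀ ζ := by
    intro x
    induction x using TensorProduct.induction_on with
    | zero =>
        rw [map_zero, TensorProduct.tmul_zero, sub_zero]; exact zero_mem _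
    | tmul a r =>
        have hq : a ⊗ₜ[RInt p K] r - (1 : RInt p F) ⊗ₜ[RInt p K] (ψ (a ⊗ₜ[RInt p K] r))
            = (a ⊗ₜ[RInt p K] (1 : R)
                - (1 : RInt p F) ⊗ₜ[RInt p K]
                    (algebraMap (RInt p E) R ((phiZeroO p K F E φE) a)))
              * ((1 : RInt p F) ⊗ₜ[RInt p K] r) := by
          rw [hψt]
          simp only [sub_mul, Algebra.TensorProduct.tmul_mul_tmul, one_mul, mul_one]
        rw [hq]
        exact Ideal.mul_mem_right _ _ (hdiff a)
    | add x y px py =>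
        have hq : x + y - (1 : RInt p F) ⊗ₜ[RInt p K] (ψ (x + y))
            = (x - (1 : RInt p F) ⊗ₜ[RInt p K] (ψ x))
              + (y - (1 : RInt p F) ⊗ₜ[RInt p K] (ψ y)) := by
          rw [map_add, TensorProduct.tmul_add]; ring
        rw [hq]; exact add_mem px py
  refine ⟨⟨?_, ?_⟩, ?_, ?_⟩
  · -- surjectivity
    intro r
    exact ⟨(1 : RInt p F) ⊗ₜ[RInt p K] r, by rw [hψt]; simp⟩
  · -- kernel
    intro x
    constructor
    · intro hx
      have h := key x
      rwa [hx, TensorProduct.tmul_zero, sub_zero] at h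
    · intro hx
      obtain ⟨y, rfl⟩ := Ideal.mem_span_singleton.mp hx
      rw [map_mul, hψe, zero_mul]
  · -- part (2), forward
    intro hstrict
    have hζact : ∀ m : M ⧸ 𝓕,
        ((ζ ⊗ₜ[RInt p K] (1 : R) : (RInt p F) ⊗[RInt p K] R)) • m
        = (((1 : RInt p F) ⊗ₜ[RInt p K]
            (algebraMap (RInt p E) R ((phiZeroO p K F E φE) ζ))
            : (RInt p F) ⊗[RInt p K] R)) • m := by
      intro m
      obtain ⟨m, rfl⟩ := Submodule.Quotient.mk_surjective 𝓕 m
      have h1 : (eElt p K F E R Q₀ ζ) • m ∈ 𝓕 :=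
        hstrict (Submodule.smul_mem_smul heJ Submodule.mem_top)
      have h2 : (eElt p K F E R Q₀ ζ) • (Submodule.Quotient.mk m : M ⧸ 𝓕) = 0 := by
        rw [← Submodule.Quotient.mk_smul]
        exact (Submodule.Quotient.mk_eq_zero _).mpr h1
      rw [he, sub_smul] at h2
      exact sub_eq_zero.mp h2
    intro a
    have ha : a ∈ Algebra.adjoin (RInt p K) ({ζ} : Set (RInt p F)) := hζ ▸ Algebra.mem_top
    induction ha using Algebra.adjoin_induction with
    | mem x hx =>
        rw [Set.mem_singleton_iff] at hx
        subst hx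
        exact hζact
    | algebraMap r =>
        intro m; rw [hbase r]
    | add x y hx hy px py =>
        intro m
        rw [TensorProduct.add_tmul, map_add, map_add, TensorProduct.tmul_add,
          add_smul, add_smul, px m, py m]
    | mul x y hx hy px py =>
        intro m
        calc ((x * y) ⊗ₜ[RInt p K] (1 : R) : (RInt p F) ⊗[RInt p K] R) • m
            = (x ⊗ₜ[RInt p K] (1 : R) : (RInt p F) ⊗[RInt p K] R) •
                ((y ⊗ₜ[RInt p K] (1 : R) : (RInt p F) ⊗[RInt p K] R) • m) := by
              rw [← mul_smul, Algebra.TensorProduct.tmul_mul_tmul, mul_one]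
          _ = (x ⊗ₜ[RInt p K] (1 : R) : (RInt p F) ⊗[RInt p K] R) •
                (((1 : RInt p F) ⊗ₜ[RInt p K]
                  (algebraMap (RInt p E) R ((phiZeroO p K F E φE) y))
                  : (RInt p F) ⊗[RInt p K] R) • m) := by rw [py m]
          _ = ((1 : RInt p F) ⊗ₜ[RInt p K]
                  (algebraMap (RInt p E) R ((phiZeroO p K F E φE) y))
                  : (RInt p F) ⊗[RInt p K] R) •
                ((x ⊗ₜ[RInt p K] (1 : R) : (RInt p F) ⊗[RInt p K] R) • m) := by
              rw [← mul_smul, ← mul_smul, mul_comm]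
          _ = ((1 : RInt p F) ⊗ₜ[RInt p K]
                  (algebraMap (RInt p E) R ((phiZeroO p K F E φE) y))
                  : (RInt p F) ⊗[RInt p K] R) •
                (((1 : RInt p F) ⊗ₜ[RInt p K]
                  (algebraMap (RInt p E) R ((phiZeroO p K F E φE) x))
                  : (RInt p F) ⊗[RInt p K] R) • m) := by rw [px m]
          _ = (((1 : RInt p F) ⊗ₜ[RInt p K]
                (algebraMap (RInt p E) R ((phiZeroO p K F E φE) (x * y)))
                : (RInt p F) ⊗[RInt p K] R)) • m := by
              rw [← mul_smul, Algebra.TensorProduct.tmul_mul_tmul, mul_one, map_mul, map_mul,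
                mul_comm (algebraMap (RInt p E) R ((phiZeroO p K F E φE) y))]
  · -- part (2), reverse
    intro hcomm
    have hem : ∀ m : M, (eElt p K F E R Q₀ ζ) • m ∈ 𝓕 := by
      intro m
      have h := hcomm ζ (Submodule.Quotient.mk m)
      have h2 : (eElt p K F E R Q₀ ζ) • (Submodule.Quotient.mk m : M ⧸ 𝓕) = 0 := by
        rw [he, sub_smul, h, sub_self]
      rw [← Submodule.Quotient.mk_smul] at h2
      exact (Submodule.Quotient.mk_eq_zero _).mp h2
    refine Submodule.smul_le.mpr ?_
    intro r hr n _
    obtain ⟨y, rfl⟩ := Ideal.mem_span_singleton.mp hr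
    rw [mul_smul]
    exact hem (y • n)

end Eis

end
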